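/- Let a = (a_k) be a finite complex sequence and f(e^{iθ}) = Σ_k a_k e^{i 2^k θ} a lacunary trigonometric polynomial on T. Then for every 1 ≤ p < ∞, ‖G^H(f)‖_{L_p(T)} ≈ ‖a‖_{ℓ_2}, with absolute implied constants (independent of p and of the sequence a), where G^H is the g-function of the periodic heat semigroup. -/

import Mathlib

open MeasureTheory ENNReal

noncomputable section

/-- The lacunary trigonometric polynomial `f(e^{iθ}) = ∑_k a_k e^{i 2^k θ}` on the circle,
with finitely supported coefficients `a`. -/
def lacunaryPoly (a : ℕ →₀ ℂ) (z : AddCircle (1 : ℝ)) : ℂ :=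
  ∑ k ∈ a.support, a k * fourier ((2 : ℤ) ^ k) z

/-- The `g`-function of the periodic heat semigroup
`H_r(f)(θ) = ∑_n f̂(n) r^{n²} e^{inθ}` applied to the lacunary polynomial with
coefficients `a`: `G^H(f) = (∫_0^1 (1-r) |d/dr H_r(f)|² dr)^{1/2}`.
(For `f = ∑_k a_k e^{i2^kθ}` one has `H_r(f) = ∑_k a_k r^{4^k} e^{i2^kθ}`.) -/
def lacunaryHeatG (a : ℕ →₀ ℂ) (z : AddCircle (1 : ℝ)) : ℝ :=
  (∫ r in Set.Ioo (0 : ℝ) 1, (1 - r) *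
      ‖deriv (fun ρ : ℝ =>
          ∑ k ∈ a.support, a k * ((ρ ^ (4 ^ k) : ℝ) : ℂ) * fourier ((2 : ℤ) ^ k) z) r‖ ^ 2)
    ^ (1 / 2 : ℝ)

set_option maxHeartbeats 1000000

namespace LacunaryAux

open Finset

/-- Coefficient weight appearing in the expansion of `|d/dr H_r f|²`. -/
def wgt (a : ℕ →₀ ℂ) (z : AddCircle (1 : ℝ)) (j k : ℕ) : ℝ :=
  ((4 : ℝ) ^ j * 4 ^ k) * (a j * (starRingEnd ℂ) (a k) *
    (fourier ((2 : ℤ) ^ j) z * (starRingEnd ℂ) (fourier ((2 : ℤ) ^ k) z))).re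

/-- The beta-type integral `∫_0^1 (1-r) r^m dr`. -/
def bas (m : ℕ) : ℝ := 1 / (m + 1) - 1 / (m + 2)

/-- Closed form for the square of the heat g-function of a lacunary polynomial. -/
def Iz (a : ℕ →₀ ℂ) (z : AddCircle (1 : ℝ)) : ℝ :=
  ∑ j ∈ a.support, ∑ k ∈ a.support, wgt a z j k * bas ((4 ^ j - 1) + (4 ^ k - 1))

lemma deriv_eq' (a : ℕ →₀ ℂ) (z : AddCircle (1 : ℝ)) (r : ℝ) :
    deriv (fun ρ : ℝ =>
        ∑ k ∈ a.support, a k * ((ρ ^ (4 ^ k) : ℝ) : ℂ) * fourier ((2 : ℤ) ^ k) z) r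
      = ∑ k ∈ a.support,
          a k * (((4 : ℝ) ^ k * r ^ (4 ^ k - 1) : ℝ) : ℂ) * fourier ((2 : ℤ) ^ k) z := by
  refine HasDerivAt.deriv (HasDerivAt.fun_sum fun k _ => ?_)
  have h := (((hasDerivAt_pow (4 ^ k) r).ofReal_comp).const_mul (a k)).mul_const
    (fourier ((2 : ℤ) ^ k) z)
  convert h using 2
  · rfl
  push_cast
  ring

lemma bas_integral (m : ℕ) :
    ∫ r in Set.Ioo (0 : ℝ) 1, (1 - r) * r ^ m = bas m := by
  rw [← MeasureTheory.integral_Ioc_eq_integral_Ioo,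
    ← intervalIntegral.integral_of_le zero_le_one]
  have h : ∀ r : ℝ, (1 - r) * r ^ m = r ^ m - r ^ (m + 1) := fun r => by ring
  simp_rw [h]
  rw [intervalIntegral.integral_sub (intervalIntegral.intervalIntegrable_pow m)
    (intervalIntegral.intervalIntegrable_pow (m + 1)), integral_pow, integral_pow]
  simp only [one_pow, ne_eq, Nat.succ_ne_zero, not_false_iff, zero_pow, bas]
  push_cast
  ring

lemma bas_nonneg (m : ℕ) : 0 ≤ bas m := by
  have h1 : (0 : ℝ) < m + 1 := by positivity
  have h2 : (0 : ℝ) < m + 2 := by positivity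
  rw [bas, sub_nonneg]
  gcongr
  linarith


lemma integrand_eq (a : ℕ →₀ ℂ) (z : AddCircle (1 : ℝ)) (r : ℝ) :
    (1 - r) * ‖∑ k ∈ a.support,
        a k * (((4 : ℝ) ^ k * r ^ (4 ^ k - 1) : ℝ) : ℂ) * fourier ((2 : ℤ) ^ k) z‖ ^ 2
    = ∑ j ∈ a.support, ∑ k ∈ a.support,
        wgt a z j k * ((1 - r) * r ^ ((4 ^ j - 1) + (4 ^ k - 1))) := by
  have hD : ∀ w : ℂ, ‖w‖ ^ 2 = (w * (starRingEnd ℂ) w).re := fun w => by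
    rw [Complex.mul_conj, Complex.ofReal_re, Complex.normSq_eq_norm_sq]
  rw [hD, map_sum, Finset.sum_mul_sum, Complex.re_sum, Finset.mul_sum]
  refine Finset.sum_congr rfl fun j hj => ?_
  rw [Complex.re_sum, Finset.mul_sum]
  refine Finset.sum_congr rfl fun k hk => ?_
  have key : (a j * (((4 : ℝ) ^ j * r ^ (4 ^ j - 1) : ℝ) : ℂ) * fourier ((2 : ℤ) ^ j) z) *
      (starRingEnd ℂ) (a k * (((4 : ℝ) ^ k * r ^ (4 ^ k - 1) : ℝ) : ℂ) * fourier ((2 : ℤ) ^ k) z)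
      = (a j * (starRingEnd ℂ) (a k) *
          (fourier ((2 : ℤ) ^ j) z * (starRingEnd ℂ) (fourier ((2 : ℤ) ^ k) z))) *
        ((((4 : ℝ) ^ j * 4 ^ k) * (r ^ (4 ^ j - 1) * r ^ (4 ^ k - 1)) : ℝ) : ℂ) := by
    simp only [map_mul, Complex.conj_ofReal]
    push_cast
    ring
  rw [key]
  have hre : ∀ (w : ℂ) (x : ℝ), (w * (x : ℂ)).re = w.re * x := fun w x => by
    simp [Complex.mul_re]
  rw [hre, wgt, pow_add]
  ring


lemma integrableOn_term (c : ℝ) (m : ℕ) :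
    IntegrableOn (fun r : ℝ => c * ((1 - r) * r ^ m)) (Set.Ioo 0 1) volume := by
  refine (Continuous.integrableOn_Icc (a := (0:ℝ)) (b := 1) ?_).mono_set Set.Ioo_subset_Icc_self
  exact continuous_const.mul ((continuous_const.sub continuous_id).mul (continuous_pow m))

lemma intI (a : ℕ →₀ ℂ) (z : AddCircle (1 : ℝ)) :
    (∫ r in Set.Ioo (0 : ℝ) 1, (1 - r) *
        ‖deriv (fun ρ : ℝ =>
            ∑ k ∈ a.support, a k * ((ρ ^ (4 ^ k) : ℝ) : ℂ) * fourier ((2 : ℤ) ^ k) z) r‖ ^ 2)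
      = Iz a z := by
  have hfun : (fun r : ℝ => (1 - r) *
      ‖deriv (fun ρ : ℝ =>
          ∑ k ∈ a.support, a k * ((ρ ^ (4 ^ k) : ℝ) : ℂ) * fourier ((2 : ℤ) ^ k) z) r‖ ^ 2)
      = fun r : ℝ => ∑ j ∈ a.support, ∑ k ∈ a.support,
          wgt a z j k * ((1 - r) * r ^ ((4 ^ j - 1) + (4 ^ k - 1))) := by
    funext r
    rw [deriv_eq', integrand_eq]
  rw [hfun, MeasureTheory.integral_finset_sum]
  · unfold Iz
    refine Finset.sum_congr rfl fun j _ => ?_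
    rw [MeasureTheory.integral_finset_sum]
    · refine Finset.sum_congr rfl fun k _ => ?_
      rw [MeasureTheory.integral_const_mul, bas_integral]
    · exact fun k _ => integrableOn_term _ _
  · exact fun j _ => integrable_finset_sum _ (fun k _ => integrableOn_term _ _)


lemma bas_cast (j k : ℕ) :
    bas ((4 ^ j - 1) + (4 ^ k - 1))
      = 1 / ((4:ℝ) ^ j + 4 ^ k - 1) - 1 / ((4:ℝ) ^ j + 4 ^ k) := by
  have hj : 1 ≤ 4 ^ j := Nat.one_le_pow _ _ (by norm_num)
  have hk : 1 ≤ 4 ^ k := Nat.one_le_pow _ _ (by norm_num)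
  have : (((4 ^ j - 1) + (4 ^ k - 1) : ℕ) : ℝ) = (4:ℝ) ^ j + 4 ^ k - 2 := by
    push_cast [hj, hk]
    ring
  rw [bas, this]
  ring_nf

lemma coef_le' {j k : ℕ} (h : j ≤ k) :
    (4 : ℝ) ^ j * 4 ^ k * bas ((4 ^ j - 1) + (4 ^ k - 1)) ≤ ((2 : ℝ)⁻¹) ^ (k - j) := by
  set A : ℝ := (4 : ℝ) ^ j with hA
  set B : ℝ := (4 : ℝ) ^ k with hB
  have hA1 : (1 : ℝ) ≤ A := one_le_pow₀ (by norm_num)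
  have hB1 : (1 : ℝ) ≤ B := one_le_pow₀ (by norm_num)
  have hAB : A ≤ B := pow_le_pow_right₀ (by norm_num) h
  have hABpos : (0 : ℝ) < A + B - 1 := by linarith
  have hABpos2 : (0 : ℝ) < A + B := by linarith
  have hbas : bas ((4 ^ j - 1) + (4 ^ k - 1)) = 1 / ((A + B - 1) * (A + B)) := by
    rw [bas_cast, ← hA, ← hB, div_sub_div _ _ (ne_of_gt hABpos) (ne_of_gt hABpos2)]
    congr 1; ring
  rw [hbas]
  have hBA : A * (4 : ℝ) ^ (k - j) = B := by
    rw [hA, hB, ← pow_add]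
    congr 1
    omega
  have step1 : A * B * (1 / ((A + B - 1) * (A + B))) ≤ A / B := by
    rw [mul_one_div, div_le_div_iff₀ (by positivity) (by positivity)]
    have h1 : B ≤ A + B - 1 := by linarith
    have h2 : B ≤ A + B := by linarith
    have h3 : B * B ≤ (A + B - 1) * (A + B) :=
      mul_le_mul h1 h2 (by positivity) (by positivity)
    nlinarith
  have step2 : A / B = ((4 : ℝ)⁻¹) ^ (k - j) := by
    rw [inv_pow, ← hBA]
    field_simp
  have step3 : ((4 : ℝ)⁻¹) ^ (k - j) ≤ ((2 : ℝ)⁻¹) ^ (k - j) :=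
    pow_le_pow_left₀ (by norm_num) (by norm_num) _
  calc A * B * (1 / ((A + B - 1) * (A + B))) ≤ A / B := step1
    _ = ((4 : ℝ)⁻¹) ^ (k - j) := step2
    _ ≤ _ := step3

lemma coef_le (j k : ℕ) :
    (4 : ℝ) ^ j * 4 ^ k * bas ((4 ^ j - 1) + (4 ^ k - 1))
      ≤ ((2 : ℝ)⁻¹) ^ (max j k - min j k) := by
  rcases le_total j k with h | h
  · rw [max_eq_right h, min_eq_left h]
    exact coef_le' h
  · rw [max_eq_left h, min_eq_right h]
    have := coef_le' h
    calc (4 : ℝ) ^ j * 4 ^ k * bas ((4 ^ j - 1) + (4 ^ k - 1))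
        = (4 : ℝ) ^ k * 4 ^ j * bas ((4 ^ k - 1) + (4 ^ j - 1)) := by rw [add_comm]; ring
      _ ≤ _ := this

lemma geo_sum_le (n : ℕ) : ∑ i ∈ Finset.range n, ((2 : ℝ)⁻¹) ^ i ≤ 2 := by
  rw [geom_sum_eq (by norm_num)]
  have h : (0 : ℝ) ≤ (2⁻¹ : ℝ) ^ n := by positivity
  rw [div_le_iff_of_neg (by norm_num)]
  linarith

lemma geom_le (s : Finset ℕ) (j : ℕ) :
    ∑ k ∈ s, ((2 : ℝ)⁻¹) ^ (max j k - min j k) ≤ 4 := by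
  classical
  rw [← Finset.sum_filter_add_sum_filter_not s (fun k => k ≤ j)]
  have hA : ∑ k ∈ s.filter (fun k => k ≤ j), ((2 : ℝ)⁻¹) ^ (max j k - min j k) ≤ 2 := by
    have h1 : ∑ k ∈ s.filter (fun k => k ≤ j), ((2 : ℝ)⁻¹) ^ (max j k - min j k)
        = ∑ k ∈ s.filter (fun k => k ≤ j), ((2 : ℝ)⁻¹) ^ (j - k) := by
      refine Finset.sum_congr rfl fun k hk => ?_
      have hkj : k ≤ j := (Finset.mem_filter.mp hk).2
      rw [max_eq_left hkj, min_eq_right hkj]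
    rw [h1]
    calc ∑ k ∈ s.filter (fun k => k ≤ j), ((2 : ℝ)⁻¹) ^ (j - k)
        ≤ ∑ k ∈ Finset.range (j + 1), ((2 : ℝ)⁻¹) ^ (j - k) := by
          refine Finset.sum_le_sum_of_subset_of_nonneg ?_ (fun i _ _ => by positivity)
          intro k hk
          exact Finset.mem_range.mpr (Nat.lt_succ_of_le (Finset.mem_filter.mp hk).2)
      _ = ∑ i ∈ Finset.range (j + 1), ((2 : ℝ)⁻¹) ^ i := by
          rw [← Finset.sum_range_reflect]
          refine Finset.sum_congr rfl fun i hi => ?_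
          have := Finset.mem_range.mp hi
          congr 1
          omega
      _ ≤ 2 := geo_sum_le _
  have hB : ∑ k ∈ s.filter (fun k => ¬ k ≤ j), ((2 : ℝ)⁻¹) ^ (max j k - min j k) ≤ 2 := by
    set B := s.sup id with hBdef
    have h1 : ∑ k ∈ s.filter (fun k => ¬ k ≤ j), ((2 : ℝ)⁻¹) ^ (max j k - min j k)
        = ∑ k ∈ s.filter (fun k => ¬ k ≤ j), ((2 : ℝ)⁻¹) ^ (k - j) := by
      refine Finset.sum_congr rfl fun k hk => ?_
      have hkj : j ≤ k := le_of_lt (Nat.lt_of_not_le (Finset.mem_filter.mp hk).2)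
      rw [max_eq_right hkj, min_eq_left hkj]
    rw [h1]
    calc ∑ k ∈ s.filter (fun k => ¬ k ≤ j), ((2 : ℝ)⁻¹) ^ (k - j)
        ≤ ∑ k ∈ Finset.Ico (j + 1) (B + 1), ((2 : ℝ)⁻¹) ^ (k - j) := by
          refine Finset.sum_le_sum_of_subset_of_nonneg ?_ (fun i _ _ => by positivity)
          intro k hk
          have h2 := Finset.mem_filter.mp hk
          refine Finset.mem_Ico.mpr ⟨Nat.succ_le_of_lt (Nat.lt_of_not_le h2.2), ?_⟩
          exact Nat.lt_succ_of_le (Finset.le_sup (f := id) h2.1)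
      _ = ∑ i ∈ Finset.range (B + 1 - (j + 1)), ((2 : ℝ)⁻¹) ^ ((j + 1 + i) - j) := by
          rw [Finset.sum_Ico_eq_sum_range]
      _ ≤ ∑ i ∈ Finset.range (B + 1 - (j + 1)), ((2 : ℝ)⁻¹) ^ i := by
          refine Finset.sum_le_sum fun i _ => ?_
          refine pow_le_pow_of_le_one (by norm_num) (by norm_num) (by omega)
      _ ≤ 2 := geo_sum_le _
  linarith


lemma abs_fourier (n : ℤ) (z : AddCircle (1 : ℝ)) : ‖fourier n z‖ = 1 := by
  rw [fourier_apply]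
  exact Circle.norm_coe _

lemma wgt_le (a : ℕ →₀ ℂ) (z : AddCircle (1 : ℝ)) (j k : ℕ) :
    wgt a z j k ≤ ((4 : ℝ) ^ j * 4 ^ k) * (‖a j‖ * ‖a k‖) := by
  refine mul_le_mul_of_nonneg_left ?_ (by positivity)
  set w : ℂ := a j * (starRingEnd ℂ) (a k) *
    (fourier ((2 : ℤ) ^ j) z * (starRingEnd ℂ) (fourier ((2 : ℤ) ^ k) z)) with hw
  calc w.re ≤ ‖w‖ := Complex.re_le_norm w
    _ = ‖a j‖ * ‖a k‖ := by
      rw [hw, norm_mul, norm_mul, norm_mul, Complex.norm_conj, Complex.norm_conj,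
        abs_fourier, abs_fourier]
      ring

lemma Iz_le (a : ℕ →₀ ℂ) (z : AddCircle (1 : ℝ)) :
    Iz a z ≤ 4 * ∑ k ∈ a.support, ‖a k‖ ^ 2 := by
  classical
  set s := a.support
  have step1 : Iz a z ≤ ∑ j ∈ s, ∑ k ∈ s,
      (‖a j‖ * ‖a k‖) * ((2 : ℝ)⁻¹) ^ (max j k - min j k) := by
    refine Finset.sum_le_sum fun j _ => Finset.sum_le_sum fun k _ => ?_
    calc wgt a z j k * bas ((4 ^ j - 1) + (4 ^ k - 1))
        ≤ (((4 : ℝ) ^ j * 4 ^ k) * (‖a j‖ * ‖a k‖)) * bas ((4 ^ j - 1) + (4 ^ k - 1)) :=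
          mul_le_mul_of_nonneg_right (wgt_le a z j k) (bas_nonneg _)
      _ = (‖a j‖ * ‖a k‖) * ((4 : ℝ) ^ j * 4 ^ k * bas ((4 ^ j - 1) + (4 ^ k - 1))) := by ring
      _ ≤ (‖a j‖ * ‖a k‖) * ((2 : ℝ)⁻¹) ^ (max j k - min j k) :=
          mul_le_mul_of_nonneg_left (coef_le j k) (by positivity)
  have step2 : ∑ j ∈ s, ∑ k ∈ s, (‖a j‖ * ‖a k‖) * ((2 : ℝ)⁻¹) ^ (max j k - min j k)
      ≤ ∑ j ∈ s, ∑ k ∈ s,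
        ((‖a j‖ ^ 2 + ‖a k‖ ^ 2) / 2) * ((2 : ℝ)⁻¹) ^ (max j k - min j k) := by
    refine Finset.sum_le_sum fun j _ => Finset.sum_le_sum fun k _ => ?_
    refine mul_le_mul_of_nonneg_right ?_ (by positivity)
    nlinarith [sq_nonneg (‖a j‖ - ‖a k‖)]
  have expand : ∀ j k : ℕ, ((‖a j‖ ^ 2 + ‖a k‖ ^ 2) / 2) * ((2 : ℝ)⁻¹) ^ (max j k - min j k)
      = (1 / 2) * (‖a j‖ ^ 2 * ((2 : ℝ)⁻¹) ^ (max j k - min j k))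
        + (1 / 2) * (‖a k‖ ^ 2 * ((2 : ℝ)⁻¹) ^ (max j k - min j k)) := fun j k => by ring
  have hsym : ∑ j ∈ s, ∑ k ∈ s, ‖a k‖ ^ 2 * ((2 : ℝ)⁻¹) ^ (max j k - min j k)
      = ∑ j ∈ s, ∑ k ∈ s, ‖a j‖ ^ 2 * ((2 : ℝ)⁻¹) ^ (max j k - min j k) := by
    rw [Finset.sum_comm]
    refine Finset.sum_congr rfl fun j _ => Finset.sum_congr rfl fun k _ => ?_
    rw [max_comm, min_comm]
  have main : ∑ j ∈ s, ∑ k ∈ s, ‖a j‖ ^ 2 * ((2 : ℝ)⁻¹) ^ (max j k - min j k)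
      ≤ ∑ j ∈ s, ‖a j‖ ^ 2 * 4 := by
    refine Finset.sum_le_sum fun j _ => ?_
    rw [← Finset.mul_sum]
    exact mul_le_mul_of_nonneg_left (geom_le s j) (by positivity)
  calc Iz a z ≤ _ := step1
    _ ≤ _ := step2
    _ = (1/2) * (∑ j ∈ s, ∑ k ∈ s, ‖a j‖ ^ 2 * ((2 : ℝ)⁻¹) ^ (max j k - min j k))
        + (1/2) * (∑ j ∈ s, ∑ k ∈ s, ‖a k‖ ^ 2 * ((2 : ℝ)⁻¹) ^ (max j k - min j k)) := by
      simp_rw [expand, Finset.sum_add_distrib, Finset.mul_sum]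
    _ = ∑ j ∈ s, ∑ k ∈ s, ‖a j‖ ^ 2 * ((2 : ℝ)⁻¹) ^ (max j k - min j k) := by
      rw [hsym]; ring
    _ ≤ ∑ j ∈ s, ‖a j‖ ^ 2 * 4 := main
    _ = 4 * ∑ k ∈ s, ‖a k‖ ^ 2 := by rw [← Finset.sum_mul, mul_comm]


lemma integrable_of_continuous {f : AddCircle (1 : ℝ) → ℝ} (hf : Continuous f) :
    Integrable f volume := by
  refine hf.integrable_of_hasCompactSupport ?_
  exact IsCompact.of_isClosed_subset isCompact_univ (isClosed_tsupport f) (Set.subset_univ _)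

lemma integrable_of_continuousC {f : AddCircle (1 : ℝ) → ℂ} (hf : Continuous f) :
    Integrable f volume := by
  refine hf.integrable_of_hasCompactSupport ?_
  exact IsCompact.of_isClosed_subset isCompact_univ (isClosed_tsupport f) (Set.subset_univ _)

lemma continuous_wgt (a : ℕ →₀ ℂ) (j k : ℕ) : Continuous (fun z => wgt a z j k) := by
  unfold wgt
  exact continuous_const.mul (Complex.continuous_re.comp (continuous_const.mul
    (((fourier _).continuous.mul ((Complex.continuous_conj).comp (fourier _).continuous)))))

lemma continuous_Iz (a : ℕ →₀ ℂ) : Continuous (Iz a) := by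
  unfold Iz
  refine continuous_finset_sum _ fun j _ => continuous_finset_sum _ fun k _ => ?_
  exact (continuous_wgt a j k).mul continuous_const

lemma volume_univ : (volume : Measure (AddCircle (1 : ℝ))) Set.univ = 1 := by
  rw [AddCircle.measure_univ]
  simp

instance : IsProbabilityMeasure (volume : Measure (AddCircle (1 : ℝ))) := ⟨volume_univ⟩

lemma fourier_orth (n : ℤ) :
    (∫ z : AddCircle (1 : ℝ), fourier n z) = if n = 0 then 1 else 0 := by
  split_ifs with h
  · subst h
    simp only [fourier_zero]
    rw [integral_const]
    simp
  · exact integral_eq_zero_of_add_right_eq_neg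
      (fun x => fourier_add_half_inv_index h one_pos x)

lemma integral_ee (j k : ℕ) :
    (∫ z : AddCircle (1 : ℝ),
        (fourier ((2 : ℤ) ^ j) z * (starRingEnd ℂ) (fourier ((2 : ℤ) ^ k) z)))
      = if j = k then 1 else 0 := by
  have key : ∀ z : AddCircle (1 : ℝ),
      fourier ((2 : ℤ) ^ j) z * (starRingEnd ℂ) (fourier ((2 : ℤ) ^ k) z)
        = fourier ((2 : ℤ) ^ j + -((2 : ℤ) ^ k)) z := fun z => by
    rw [fourier_add, fourier_neg]
  simp_rw [key]
  rw [fourier_orth]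
  have heq : ((2 : ℤ) ^ j + -((2 : ℤ) ^ k) = 0) ↔ j = k := by
    constructor
    · intro h
      have h2 : (2 : ℤ) ^ j = 2 ^ k := by linarith
      have h3 : ((2 ^ j : ℕ) : ℤ) = ((2 ^ k : ℕ) : ℤ) := by push_cast; exact h2
      exact Nat.pow_right_injective (le_refl 2) (Nat.cast_injective h3)
    · rintro rfl; ring
  simp [heq]

lemma integral_wgt (a : ℕ →₀ ℂ) (j k : ℕ) :
    (∫ z : AddCircle (1 : ℝ), wgt a z j k)
      = if j = k then ((4 : ℝ) ^ j * 4 ^ k) * ‖a j‖ ^ 2 else 0 := by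
  unfold wgt
  rw [MeasureTheory.integral_const_mul]
  have hint : Integrable (fun z : AddCircle (1 : ℝ) => a j * (starRingEnd ℂ) (a k) *
      (fourier ((2 : ℤ) ^ j) z * (starRingEnd ℂ) (fourier ((2 : ℤ) ^ k) z))) volume := by
    refine integrable_of_continuousC ?_
    exact continuous_const.mul
      ((fourier _).continuous.mul ((Complex.continuous_conj).comp (fourier _).continuous))
  have hre := integral_re (𝕜 := ℂ) hint
  simp only [RCLike.re_to_complex] at hre
  rw [hre, MeasureTheory.integral_const_mul, integral_ee]
  split_ifs with h
  · subst h
    rw [mul_one, Complex.mul_conj]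
    simp only [Complex.normSq_eq_norm_sq]
    rw [Complex.ofReal_re]
  · simp

lemma integral_Iz (a : ℕ →₀ ℂ) :
    (∫ z : AddCircle (1 : ℝ), Iz a z)
      = ∑ k ∈ a.support,
          ((4 : ℝ) ^ k * 4 ^ k * bas ((4 ^ k - 1) + (4 ^ k - 1))) * ‖a k‖ ^ 2 := by
  unfold Iz
  rw [MeasureTheory.integral_finset_sum _ (fun j _ => integrable_finset_sum _
    (fun k _ => ((show Continuous fun z => wgt a z j k * bas ((4 ^ j - 1) + (4 ^ k - 1)) from
        (continuous_wgt a j k).mul continuous_const)).integrable_of_hasCompactSupport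
      (IsCompact.of_isClosed_subset isCompact_univ (isClosed_tsupport _) (Set.subset_univ _))))]
  have h1 : ∀ j ∈ a.support, (∫ z : AddCircle (1 : ℝ), ∑ k ∈ a.support,
      wgt a z j k * bas ((4 ^ j - 1) + (4 ^ k - 1)))
      = ∑ k ∈ a.support, (∫ z : AddCircle (1 : ℝ), wgt a z j k) * bas ((4 ^ j - 1) + (4 ^ k - 1)) := by
    intro j _
    rw [MeasureTheory.integral_finset_sum _ (fun k _ =>
      (show Continuous fun z => wgt a z j k * bas ((4 ^ j - 1) + (4 ^ k - 1)) from
        (continuous_wgt a j k).mul continuous_const).integrable_of_hasCompactSupport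
        (IsCompact.of_isClosed_subset isCompact_univ (isClosed_tsupport _) (Set.subset_univ _)))]
    exact Finset.sum_congr rfl fun k _ => MeasureTheory.integral_mul_const _ _
  rw [Finset.sum_congr rfl h1]
  simp_rw [integral_wgt, ite_mul, zero_mul]
  rw [Finset.sum_congr rfl fun j hj => Finset.sum_ite_eq a.support j
    (fun k => ((4 : ℝ) ^ j * 4 ^ k) * ‖a j‖ ^ 2 * bas ((4 ^ j - 1) + (4 ^ k - 1)))]
  refine Finset.sum_congr rfl fun k hk => ?_
  rw [if_pos hk]
  ring


lemma diag_ge (k : ℕ) :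
    (1 : ℝ) / 4 ≤ (4 : ℝ) ^ k * 4 ^ k * bas ((4 ^ k - 1) + (4 ^ k - 1)) := by
  set B : ℝ := (4 : ℝ) ^ k with hB
  have hB1 : (1 : ℝ) ≤ B := one_le_pow₀ (by norm_num)
  have h1 : (0:ℝ) < B + B - 1 := by linarith
  have h2 : (0:ℝ) < B + B := by linarith
  have hb : bas ((4 ^ k - 1) + (4 ^ k - 1)) = 1 / ((B + B - 1) * (B + B)) := by
    rw [bas_cast, ← hB, div_sub_div _ _ (ne_of_gt h1) (ne_of_gt h2)]
    congr 1; ring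
  rw [hb, mul_one_div, le_div_iff₀ (by positivity)]
  nlinarith

lemma G_eq_sqrt (a : ℕ →₀ ℂ) (z : AddCircle (1 : ℝ)) :
    lacunaryHeatG a z = Real.sqrt (Iz a z) := by
  rw [lacunaryHeatG, intI]
  exact (Real.sqrt_eq_rpow _).symm

lemma Iz_nonneg (a : ℕ →₀ ℂ) (z : AddCircle (1 : ℝ)) : 0 ≤ Iz a z := by
  rw [← intI a z]
  refine MeasureTheory.setIntegral_nonneg measurableSet_Ioo fun r hr => ?_
  have h1 : (0:ℝ) ≤ 1 - r := by linarith [hr.2]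
  positivity


end LacunaryAux

open LacunaryAux in
/-- For lacunary series, the `L_p`-norm of the heat `g`-function is equivalent to the
`ℓ_2`-norm of the coefficients: `‖G^H(∑_k a_k e^{i2^kθ})‖_{L_p(T)} ≈ ‖a‖_{ℓ_2}` for all
`1 ≤ p < ∞`, with absolute constants independent of `p` and `a`. -/
theorem lacunaryHeatG_eLpNorm_equiv :
    ∃ C : ℝ, 0 < C ∧ ∀ p : ℝ, 1 ≤ p → ∀ a : ℕ →₀ ℂ,
      eLpNorm (lacunaryHeatG a) (ENNReal.ofReal p) volume ≤
        ENNReal.ofReal (C * Real.sqrt (∑ k ∈ a.support, ‖a k‖ ^ 2)) ∧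
      ENNReal.ofReal (Real.sqrt (∑ k ∈ a.support, ‖a k‖ ^ 2)) ≤
        ENNReal.ofReal C * eLpNorm (lacunaryHeatG a) (ENNReal.ofReal p) volume := by
  refine ⟨16, by norm_num, fun p hp a => ?_⟩
  set S2 : ℝ := ∑ k ∈ a.support, ‖a k‖ ^ 2 with hS2def
  have hS2nn : 0 ≤ S2 := Finset.sum_nonneg fun k _ => by positivity
  set S : ℝ := Real.sqrt S2 with hSdef
  have hSnn : 0 ≤ S := Real.sqrt_nonneg _
  have hSS : S ^ 2 = S2 := Real.sq_sqrt hS2nn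
  have hGnn : ∀ z, 0 ≤ lacunaryHeatG a z := fun z => by
    rw [G_eq_sqrt]; exact Real.sqrt_nonneg _
  have hGle : ∀ z, lacunaryHeatG a z ≤ 2 * S := fun z => by
    rw [G_eq_sqrt]
    calc Real.sqrt (Iz a z) ≤ Real.sqrt (4 * S2) := Real.sqrt_le_sqrt (Iz_le a z)
      _ = 2 * S := by
        rw [show (4 : ℝ) * S2 = (2 * S)^2 by rw [mul_pow, hSS]; norm_num]
        exact Real.sqrt_sq (by linarith)
  have hGc : Continuous (lacunaryHeatG a) := by
    have : lacunaryHeatG a = fun z => Real.sqrt (Iz a z) := funext fun z => G_eq_sqrt a z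
    rw [this]
    exact Real.continuous_sqrt.comp (continuous_Iz a)
  constructor
  · -- upper bound
    have h1 : eLpNorm (lacunaryHeatG a) (ENNReal.ofReal p) volume
        ≤ (volume Set.univ) ^ (ENNReal.ofReal p).toReal⁻¹ * ENNReal.ofReal (2 * S) :=
      eLpNorm_le_of_ae_bound (Filter.Eventually.of_forall fun z => by
        rw [Real.norm_eq_abs, abs_of_nonneg (hGnn z)]; exact hGle z)
    rw [volume_univ, ENNReal.one_rpow, one_mul] at h1
    refine h1.trans (ENNReal.ofReal_le_ofReal ?_)
    nlinarith
  · -- lower bound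
    by_cases hz : S2 = 0
    · have : S = 0 := by rw [hSdef, hz, Real.sqrt_zero]
      rw [this]
      simp
    · have hS2pos : 0 < S2 := lt_of_le_of_ne hS2nn (Ne.symm hz)
      have hSpos : 0 < S := Real.sqrt_pos.mpr hS2pos
      have hIint : Integrable (Iz a) volume := integrable_of_continuous (continuous_Iz a)
      have hGint : Integrable (lacunaryHeatG a) volume := integrable_of_continuous hGc
      -- pointwise sqrt lower bound
      have hmono : ∀ z, Iz a z / (2 * S) ≤ lacunaryHeatG a z := fun z => by
        rw [G_eq_sqrt]
        rw [div_le_iff₀ (by linarith : (0:ℝ) < 2 * S)]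
        calc Iz a z = Real.sqrt (Iz a z) * Real.sqrt (Iz a z) :=
              (Real.mul_self_sqrt (Iz_nonneg a z)).symm
          _ ≤ Real.sqrt (Iz a z) * (2 * S) := by
              refine mul_le_mul_of_nonneg_left ?_ (Real.sqrt_nonneg _)
              calc Real.sqrt (Iz a z) ≤ Real.sqrt (4 * S2) := Real.sqrt_le_sqrt (Iz_le a z)
                _ = 2 * S := by
                  rw [show (4 : ℝ) * S2 = (2 * S)^2 by rw [mul_pow, hSS]; norm_num]
                  exact Real.sqrt_sq (by linarith)
      have hIzint : S2 / 4 ≤ ∫ z : AddCircle (1 : ℝ), Iz a z := by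
        rw [integral_Iz]
        calc S2 / 4 = ∑ k ∈ a.support, (1/4) * ‖a k‖ ^ 2 := by
              rw [← Finset.mul_sum, ← hS2def]; ring
          _ ≤ _ := Finset.sum_le_sum fun k _ =>
              mul_le_mul_of_nonneg_right (by simpa using diag_ge k) (by positivity)
      have hintG : S / 8 ≤ ∫ z : AddCircle (1 : ℝ), lacunaryHeatG a z := by
        have h2 : (∫ z : AddCircle (1 : ℝ), Iz a z / (2 * S))
            ≤ ∫ z : AddCircle (1 : ℝ), lacunaryHeatG a z :=
          integral_mono (hIint.div_const _) hGint hmono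
        rw [integral_div] at h2
        have h3 : S / 8 ≤ (∫ z : AddCircle (1 : ℝ), Iz a z) / (2 * S) := by
          rw [le_div_iff₀ (by linarith : (0:ℝ) < 2 * S)]
          calc S / 8 * (2 * S) = S2 / 4 := by rw [← hSS]; ring
            _ ≤ _ := hIzint
        linarith
      have key : ENNReal.ofReal (S / 8)
          ≤ eLpNorm (lacunaryHeatG a) (ENNReal.ofReal p) volume := by
        have hle1 : eLpNorm (lacunaryHeatG a) 1 volume
            ≤ eLpNorm (lacunaryHeatG a) (ENNReal.ofReal p) volume := by
          refine eLpNorm_le_eLpNorm_of_exponent_le ?_ hGc.aestronglyMeasurable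
          rw [← ENNReal.ofReal_one]
          exact ENNReal.ofReal_le_ofReal hp
        refine le_trans ?_ hle1
        rw [eLpNorm_one_eq_lintegral_enorm]
        calc ENNReal.ofReal (S / 8)
            ≤ ENNReal.ofReal (∫ z : AddCircle (1 : ℝ), lacunaryHeatG a z) :=
              ENNReal.ofReal_le_ofReal hintG
          _ = ∫⁻ z : AddCircle (1 : ℝ), ENNReal.ofReal (lacunaryHeatG a z) :=
              MeasureTheory.ofReal_integral_eq_lintegral_ofReal hGint
                (Filter.Eventually.of_forall hGnn)
          _ = ∫⁻ z : AddCircle (1 : ℝ), ‖lacunaryHeatG a z‖ₑ := by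
              refine lintegral_congr fun z => ?_
              rw [Real.enorm_eq_ofReal (hGnn z)]
      calc ENNReal.ofReal S ≤ ENNReal.ofReal 16 * ENNReal.ofReal (S / 8) := by
            rw [← ENNReal.ofReal_mul (by norm_num)]
            exact ENNReal.ofReal_le_ofReal (by linarith)
        _ ≤ _ := mul_le_mul_right key _
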